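/- Let A be an n×n quaternion matrix with Moore–Penrose inverse Y. If Z₁ and Z₂ are two matrices each satisfying A·Zᵢ = A·Y and R_r(Zᵢ) = R_r(A) (i = 1, 2), then Z₁ = Z₂; that is, the right core inverse of a quaternion matrix, when it exists, is unique. -/
import Mathlib

namespace RCIAux
abbrev H := Quaternion ℝ

instance instFin : Module.Finite Hᵐᵒᵖ H := by
  refine ⟨⟨{1}, ?_⟩⟩
  rw [eq_top_iff]
  intro x _
  have : x = MulOpposite.op x • (1 : H) := by simp
  rw [this]
  exact Submodule.smul_mem _ _ (Submodule.subset_span (by simp))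

/-- `mulVec` as a right-linear map. -/
def mv {n : ℕ} (A : Matrix (Fin n) (Fin n) H) : (Fin n → H) →ₗ[Hᵐᵒᵖ] (Fin n → H) where
  toFun := A.mulVec
  map_add' x y := Matrix.mulVec_add A x y
  map_smul' c x := by
    funext i
    simp [Matrix.mulVec, dotProduct, MulOpposite.smul_eq_mul_unop,
      Finset.sum_mul, mul_assoc]

end RCIAux

open RCIAux in
/-- The right core inverse of a quaternion matrix, when it exists, is unique. -/
theorem right_core_inverse_unique {n : ℕ}
    (A Y Z₁ Z₂ : Matrix (Fin n) (Fin n) (Quaternion ℝ))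
    (hY1 : A * Y * A = A) (hY2 : Y * A * Y = Y)
    (hY3 : (A * Y).conjTranspose = A * Y) (hY4 : (Y * A).conjTranspose = Y * A)
    (hZ₁ : A * Z₁ = A * Y)
    (hR₁ : {y : Fin n → Quaternion ℝ | ∃ x, Z₁.mulVec x = y} =
      {y : Fin n → Quaternion ℝ | ∃ x, A.mulVec x = y})
    (hZ₂ : A * Z₂ = A * Y)
    (hR₂ : {y : Fin n → Quaternion ℝ | ∃ x, Z₂.mulVec x = y} =
      {y : Fin n → Quaternion ℝ | ∃ x, A.mulVec x = y}) :
    Z₁ = Z₂ := by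
  set S : Submodule Hᵐᵒᵖ (Fin n → H) := LinearMap.range (mv A) with hS
  have memS : ∀ v, v ∈ S ↔ ∃ x, A.mulVec x = v := fun v => Iff.rfl
  -- columns of Z₁, Z₂ are in S
  have hZ₁S : ∀ x, Z₁.mulVec x ∈ S := by
    intro x
    have : Z₁.mulVec x ∈ {y : Fin n → Quaternion ℝ | ∃ x, A.mulVec x = y} := by
      rw [← hR₁]; exact ⟨x, rfl⟩
    exact this
  have hZ₂S : ∀ x, Z₂.mulVec x ∈ S := by
    intro x
    have : Z₂.mulVec x ∈ {y : Fin n → Quaternion ℝ | ∃ x, A.mulVec x = y} := by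
      rw [← hR₂]; exact ⟨x, rfl⟩
    exact this
  -- A maps S to S
  have hmaps : ∀ v ∈ S, mv A v ∈ S := fun v _ => ⟨v, rfl⟩
  set g : S →ₗ[Hᵐᵒᵖ] S := (mv A).restrict hmaps with hg
  -- g is surjective
  have hsurj : Function.Surjective g := by
    rintro ⟨v, x, rfl⟩
    refine ⟨⟨Z₂.mulVec (A.mulVec x), hZ₂S _⟩, ?_⟩
    apply Subtype.ext
    show A.mulVec (Z₂.mulVec (A.mulVec x)) = A.mulVec x
    rw [Matrix.mulVec_mulVec, hZ₂, Matrix.mulVec_mulVec, hY1]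
  have hinj : Function.Injective g := (LinearMap.injective_iff_surjective).mpr hsurj
  -- conclude
  have key : ∀ x, Z₁.mulVec x = Z₂.mulVec x := by
    intro x
    have hmem : Z₁.mulVec x - Z₂.mulVec x ∈ S := S.sub_mem (hZ₁S x) (hZ₂S x)
    have h0 : g ⟨Z₁.mulVec x - Z₂.mulVec x, hmem⟩ = 0 := by
      apply Subtype.ext
      show A.mulVec (Z₁.mulVec x - Z₂.mulVec x) = 0
      rw [Matrix.mulVec_sub, Matrix.mulVec_mulVec, Matrix.mulVec_mulVec, hZ₁, hZ₂, sub_self]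
    have := hinj (a₁ := ⟨Z₁.mulVec x - Z₂.mulVec x, hmem⟩) (a₂ := 0) (by simpa using h0)
    have h1 : Z₁.mulVec x - Z₂.mulVec x = 0 := congrArg Subtype.val this
    exact sub_eq_zero.mp h1
  apply Matrix.ext
  intro i j
  have := congrFun (key (Pi.single j 1)) i
  simpa [Matrix.mulVec_single] using this
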